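/- Let G be a bipartite graph without cycles (a forest), with parts T₀ (thieves) and B (beads), where every bead-vertex has degree at least 2 and every thief t has degree at least α_t + 1 for given nonnegative integers α_t with Σ_t α_t + 1 = |B|. Fix a distinguished thief t₀. Then there exists a subset F of edges such that every bead-vertex is incident to exactly one edge of F, thief t₀ is incident to exactly α_{t₀} + 1 edges of F, and every other thief t is incident to exactly α_t edges of F. -/

import Mathlib

set_option linter.unusedSectionVars false

open SimpleGraph

section TreeAux

variable {V : Type*} [DecidableEq V] {G : SimpleGraph V}

lemma aux_dist_le_of_mem_support {u r w : V} (p : G.Walk u r) (hw : w ∈ p.support) :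
    G.dist w r ≤ p.length :=
  le_trans (SimpleGraph.dist_le (p.dropUntil w hw)) (SimpleGraph.Walk.length_dropUntil_le p hw)

lemma aux_dist_lt_of_mem_support {u r w : V} (p : G.Walk u r) (hw : w ∈ p.support)
    (hne : w ≠ u) : G.dist w r + 1 ≤ p.length := by
  have hlen : (p.takeUntil w hw).length + (p.dropUntil w hw).length = p.length := by
    rw [← SimpleGraph.Walk.length_append, p.take_spec hw]
  have h1 : 1 ≤ (p.takeUntil w hw).length := by
    rcases Nat.eq_zero_or_pos (p.takeUntil w hw).length with h | h
    · exact absurd (SimpleGraph.Walk.eq_of_length_eq_zero h) (Ne.symm hne)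
    · exact h
  have h2 := SimpleGraph.dist_le (p.dropUntil w hw)
  omega

lemma aux_adj_dist_le {u v r : V} (h : G.Adj u v) (hr : G.Reachable v r) :
    G.dist u r ≤ G.dist v r + 1 := by
  obtain ⟨p, hp⟩ := hr.exists_walk_length_eq_dist
  calc G.dist u r ≤ (SimpleGraph.Walk.cons h p).length := SimpleGraph.dist_le _
    _ = p.length + 1 := SimpleGraph.Walk.length_cons _ _
    _ = G.dist v r + 1 := by rw [hp]

lemma aux_adj_dist_ne (hac : G.IsAcyclic) {u v r : V} (h : G.Adj u v)
    (hr : G.Reachable u r) : G.dist u r ≠ G.dist v r := by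
  intro heq
  have hrv : G.Reachable v r := (h.symm.reachable).trans hr
  obtain ⟨p, hp, hpl⟩ := hr.exists_path_of_dist
  obtain ⟨q, hq, hql⟩ := hrv.exists_path_of_dist
  have hvp : v ∉ p.support := by
    intro hv
    have := aux_dist_lt_of_mem_support p hv h.ne'
    omega
  have hP := hac.path_unique ⟨SimpleGraph.Walk.cons h.symm p, hp.cons hvp⟩ ⟨q, hq⟩
  have hlen := congrArg (fun z : G.Path v r => z.1.length) hP
  simp only [SimpleGraph.Walk.length_cons] at hlen
  omega

lemma aux_parent_unique (hac : G.IsAcyclic) {v r u₁ u₂ : V} (h1 : G.Adj v u₁)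
    (h2 : G.Adj v u₂) (hr : G.Reachable v r)
    (d1 : G.dist u₁ r + 1 = G.dist v r) (d2 : G.dist u₂ r + 1 = G.dist v r) : u₁ = u₂ := by
  have hr1 : G.Reachable u₁ r := (h1.symm.reachable).trans hr
  have hr2 : G.Reachable u₂ r := (h2.symm.reachable).trans hr
  obtain ⟨p₁, hp₁, hl₁⟩ := hr1.exists_path_of_dist
  obtain ⟨p₂, hp₂, hl₂⟩ := hr2.exists_path_of_dist
  have hv₁ : v ∉ p₁.support := by
    intro hv
    have := aux_dist_le_of_mem_support p₁ hv
    omega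
  have hv₂ : v ∉ p₂.support := by
    intro hv
    have := aux_dist_le_of_mem_support p₂ hv
    omega
  have hP := hac.path_unique ⟨SimpleGraph.Walk.cons h1 p₁, hp₁.cons hv₁⟩
      ⟨SimpleGraph.Walk.cons h2 p₂, hp₂.cons hv₂⟩
  have hsupp := congrArg (fun z : G.Path v r => z.1.support) hP
  simp only [SimpleGraph.Walk.support_cons, List.cons.injEq, true_and] at hsupp
  rw [p₁.support_eq_cons, p₂.support_eq_cons] at hsupp
  exact ((List.cons.injEq _ _ _ _).mp hsupp).1

lemma aux_dichotomy (hac : G.IsAcyclic) {u v r : V} (h : G.Adj u v)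
    (hr : G.Reachable u r) :
    G.dist u r + 1 = G.dist v r ∨ G.dist v r + 1 = G.dist u r := by
  have hrv : G.Reachable v r := (h.symm.reachable).trans hr
  have h1 := aux_adj_dist_le h hrv
  have h2 := aux_adj_dist_le h.symm hr
  have h3 := aux_adj_dist_ne hac h hr
  omega

lemma aux_exists_parent {v r : V} (hr : G.Reachable v r) (hne : v ≠ r) :
    ∃ u, G.Adj v u ∧ G.dist u r + 1 = G.dist v r := by
  obtain ⟨p, hp⟩ := hr.exists_walk_length_eq_dist
  cases p with
  | nil => exact absurd rfl hne
  | cons h q =>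
    refine ⟨_, h, ?_⟩
    have h1 := SimpleGraph.dist_le q
    have h2 := aux_adj_dist_le h q.reachable
    simp only [SimpleGraph.Walk.length_cons] at hp
    omega

end TreeAux



/-- The simple graph on `T ⊕ B` associated with a bipartite edge set
`E ⊆ T × B`. -/
def biGraph {T B : Type} (E : Finset (T × B)) : SimpleGraph (T ⊕ B) where
  Adj u v := ∃ t b, (t, b) ∈ E ∧
    ((u = Sum.inl t ∧ v = Sum.inr b) ∨ (v = Sum.inl t ∧ u = Sum.inr b))
  symm := by
    constructor
    rintro u v ⟨t, b, h, hc⟩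
    exact ⟨t, b, h, hc.symm⟩
  loopless := by
    constructor
    rintro u ⟨t, b, h, (⟨h1, h2⟩ | ⟨h1, h2⟩)⟩ <;> simp_all

/-- Rounding lemma for the case `r_j = 1`: in an acyclic bipartite graph of
thieves `T` and beads `B` where each bead has degree at least `2`, each thief
`t` has degree at least `α t + 1`, and `∑ α t + 1 = |B|`, for any distinguished
thief `t₀` there is a set of edges `F` assigning each bead to exactly one
thief so that `t₀` gets `α t₀ + 1` beads and every other thief `t` gets `α t`
beads. -/
theorem round_r_one {T B : Type} [Fintype T] [Fintype B] [DecidableEq T] [DecidableEq B]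
    (E : Finset (T × B)) (hacyclic : (biGraph E).IsAcyclic)
    (α : T → ℕ)
    (hbead : ∀ b : B, 2 ≤ (E.filter (fun e => e.2 = b)).card)
    (hthief : ∀ t : T, α t + 1 ≤ (E.filter (fun e => e.1 = t)).card)
    (hsum : (∑ t : T, α t) + 1 = Fintype.card B)
    (t₀ : T) :
    ∃ F ⊆ E,
      (∀ b : B, (F.filter (fun e => e.2 = b)).card = 1) ∧
      (F.filter (fun e => e.1 = t₀)).card = α t₀ + 1 ∧
      (∀ t : T, t ≠ t₀ → (F.filter (fun e => e.1 = t)).card = α t) := by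
  classical
  set G := biGraph E with hGdef
  -- adjacency characterizations
  have adjTB : ∀ (t : T) (b : B), G.Adj (Sum.inl t) (Sum.inr b) ↔ (t, b) ∈ E := by
    intro t b
    constructor
    · rintro ⟨t', b', hm, (⟨h1, h2⟩ | ⟨h1, h2⟩)⟩ <;> simp_all
    · intro h; exact ⟨t, b, h, Or.inl ⟨rfl, rfl⟩⟩
  have adjInr : ∀ {b : B} {u}, G.Adj (Sum.inr b) u → ∃ t, u = Sum.inl t ∧ (t, b) ∈ E := by
    rintro b u ⟨t', b', hm, (⟨h1, h2⟩ | ⟨h1, h2⟩)⟩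
    · simp at h1
    · obtain rfl := Sum.inr.inj h2
      exact ⟨t', h1, hm⟩
  have adjInl : ∀ {t : T} {u}, G.Adj (Sum.inl t) u → ∃ b, u = Sum.inr b ∧ (t, b) ∈ E := by
    rintro t u ⟨t', b', hm, (⟨h1, h2⟩ | ⟨h1, h2⟩)⟩
    · obtain rfl := Sum.inl.inj h1
      exact ⟨b', h2, hm⟩
    · simp at h2
  set N := Fintype.card T + ∑ t : T, α t with hN
  have hEfib : E.card = ∑ t : T, (E.filter (fun e => e.1 = t)).card :=
    Finset.card_eq_sum_card_fiberwise (s := E) (f := fun e : T × B => e.1) (fun e _ => Finset.mem_univ _)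
  have hsum_alpha : ∑ t : T, (α t + 1) = N := by
    rw [Finset.sum_add_distrib, Finset.sum_const, smul_eq_mul, mul_one, Finset.card_univ, hN]
    omega
  have hE_ge : N ≤ E.card := by
    rw [hEfib, ← hsum_alpha]
    exact Finset.sum_le_sum fun t _ => hthief t
  -- roots of components
  set rt : T ⊕ B → T ⊕ B := fun v => Quot.out (G.connectedComponentMk v) with hrt
  have hrt_reach : ∀ v, G.Reachable v (rt v) := by
    intro v
    apply SimpleGraph.ConnectedComponent.exact
    exact (Quot.out_eq (G.connectedComponentMk v)).symm
  have hrt_adj : ∀ {u v}, G.Adj u v → rt u = rt v := by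
    intro u v h
    simp only [hrt]
    congr 1
    exact SimpleGraph.ConnectedComponent.sound h.reachable
  have hrt_fix : ∀ v, rt (rt v) = rt v := by
    intro v
    simp only [hrt]
    congr 1
    exact Quot.out_eq (G.connectedComponentMk v)
  -- the child map
  set d : T ⊕ B → ℕ := fun v => G.dist v (rt v) with hd
  set child : T × B → T ⊕ B :=
    fun e => if d (Sum.inl e.1) < d (Sum.inr e.2) then Sum.inr e.2 else Sum.inl e.1 with hchild
  have hadj_rt : ∀ e ∈ E, G.Adj (Sum.inl e.1) (Sum.inr e.2) := by
    intro e he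
    exact (adjTB e.1 e.2).mpr (by simpa using he)
  have key : ∀ e ∈ E, ∃ u, G.Adj (child e) u ∧
      G.dist u (rt (child e)) + 1 = G.dist (child e) (rt (child e)) ∧
      ((child e = Sum.inr e.2 ∧ u = Sum.inl e.1) ∨ (child e = Sum.inl e.1 ∧ u = Sum.inr e.2)) := by
    intro e he
    have a := hadj_rt e he
    have hrteq : rt (Sum.inl e.1) = rt (Sum.inr e.2) := hrt_adj a
    have hdi := aux_dichotomy hacyclic a (hrt_reach (Sum.inl e.1))
    have hd1 : d (Sum.inl e.1) = G.dist (Sum.inl e.1) (rt (Sum.inl e.1)) := rfl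
    have hd2 : d (Sum.inr e.2) = G.dist (Sum.inr e.2) (rt (Sum.inl e.1)) := by
      simp only [hd, hrteq]
    rcases hdi with hdi | hdi
    · -- the bead is the child
      have hlt : d (Sum.inl e.1) < d (Sum.inr e.2) := by rw [hd1, hd2]; omega
      refine ⟨Sum.inl e.1, ?_, ?_, Or.inl ⟨?_, rfl⟩⟩
      · simp only [hchild]
        rw [if_pos hlt]
        exact a.symm
      · simp only [hchild]
        rw [if_pos hlt, ← hrteq]
        exact hdi
      · simp only [hchild]
        rw [if_pos hlt]
    · -- the thief is the child
      have hlt : ¬ d (Sum.inl e.1) < d (Sum.inr e.2) := by rw [hd1, hd2]; omega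
      refine ⟨Sum.inr e.2, ?_, ?_, Or.inr ⟨?_, rfl⟩⟩
      · simp only [hchild]
        rw [if_neg hlt]
        exact a
      · simp only [hchild]
        rw [if_neg hlt]
        exact hdi
      · simp only [hchild]
        rw [if_neg hlt]
  set S : Finset (T ⊕ B) := Finset.univ.filter (fun v => v ≠ rt v) with hS
  have hchild_mem : ∀ e ∈ E, child e ∈ S := by
    intro e he
    obtain ⟨u, ha, hdist, _⟩ := key e he
    simp only [hS, Finset.mem_filter, Finset.mem_univ, true_and]
    intro hfix
    have hzero : G.dist (child e) (rt (child e)) = 0 := by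
      rw [← hfix]; exact SimpleGraph.dist_self
    omega
  have hchild_inj : Set.InjOn child E := by
    intro e₁ he₁ e₂ he₂ heq
    obtain ⟨u₁, ha₁, hd₁, hc₁⟩ := key e₁ (by simpa using he₁)
    obtain ⟨u₂, ha₂, hd₂, hc₂⟩ := key e₂ (by simpa using he₂)
    rw [heq] at ha₁ hd₁
    have hu : u₁ = u₂ :=
      aux_parent_unique hacyclic ha₁ ha₂ (hrt_reach (child e₂)) hd₁ hd₂
    rcases hc₁ with ⟨hb₁, ht₁⟩ | ⟨ht₁, hb₁⟩ <;> rcases hc₂ with ⟨hb₂, ht₂⟩ | ⟨ht₂, hb₂⟩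
    · have hbb : (Sum.inr e₁.2 : T ⊕ B) = Sum.inr e₂.2 := by rw [← hb₁, ← hb₂, heq]
      have htt : (Sum.inl e₁.1 : T ⊕ B) = Sum.inl e₂.1 := by rw [← ht₁, ← ht₂, hu]
      exact Prod.ext (Sum.inl.inj htt) (Sum.inr.inj hbb)
    · exfalso
      rw [heq, ht₂] at hb₁
      exact Sum.inl_ne_inr hb₁
    · exfalso
      rw [heq, hb₂] at ht₁
      exact Sum.inr_ne_inl ht₁
    · have htt : (Sum.inl e₁.1 : T ⊕ B) = Sum.inl e₂.1 := by rw [← ht₁, ← ht₂, heq]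
      have hbb : (Sum.inr e₁.2 : T ⊕ B) = Sum.inr e₂.2 := by rw [← hb₁, ← hb₂, hu]
      exact Prod.ext (Sum.inl.inj htt) (Sum.inr.inj hbb)
  have hcard_le : E.card ≤ S.card :=
    Finset.card_le_card_of_injOn child hchild_mem hchild_inj
  have hr₀_fix : rt (rt (Sum.inl t₀)) = rt (Sum.inl t₀) := hrt_fix (Sum.inl t₀)
  have hS_sub : S ⊆ Finset.univ.erase (rt (Sum.inl t₀)) := by
    intro v hv
    simp only [hS, Finset.mem_filter, Finset.mem_univ, true_and] at hv
    refine Finset.mem_erase.mpr ⟨?_, Finset.mem_univ v⟩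
    intro hveq
    rw [hveq] at hv
    exact hv hr₀_fix.symm
  have hcardV : Fintype.card (T ⊕ B) = N + 1 := by
    rw [Fintype.card_sum]
    omega
  have hcard_erase : (Finset.univ.erase (rt (Sum.inl t₀))).card = N := by
    rw [Finset.card_erase_of_mem (Finset.mem_univ _), Finset.card_univ, hcardV]
    omega
  have hE_le : E.card ≤ N :=
    le_trans hcard_le (le_trans (Finset.card_le_card hS_sub) hcard_erase.le)
  have hE_eq : E.card = N := le_antisymm hE_le hE_ge
  have hS_eq : S = Finset.univ.erase (rt (Sum.inl t₀)) := by
    apply Finset.eq_of_subset_of_card_le hS_sub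
    rw [hcard_erase]
    omega
  -- connectivity to `Sum.inl t₀`
  have hreach : ∀ v, G.Reachable v (Sum.inl t₀) := by
    intro v
    have hout : rt v = rt (Sum.inl t₀) := by
      by_contra hne
      have hmem : rt v ∈ S := by
        rw [hS_eq]
        exact Finset.mem_erase.mpr ⟨hne, Finset.mem_univ _⟩
      simp only [hS, Finset.mem_filter, Finset.mem_univ, true_and] at hmem
      exact hmem (hrt_fix v).symm
    exact (hrt_reach v).trans (hout ▸ (hrt_reach (Sum.inl t₀)).symm)
  -- exact thief degrees
  have hfib_eq : ∀ t : T, (E.filter (fun e => e.1 = t)).card = α t + 1 := by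
    have hsum_eq : ∑ t : T, (α t + 1) = ∑ t : T, (E.filter (fun e => e.1 = t)).card := by
      rw [hsum_alpha, ← hEfib, hE_eq]
    intro t
    have h := (Finset.sum_eq_sum_iff_of_le (fun i _ => hthief i)).mp hsum_eq t (Finset.mem_univ t)
    omega
  -- the assignment: each bead goes to its parent in the tree rooted at `t₀`
  set F : Finset (T × B) :=
    E.filter (fun e =>
      G.dist (Sum.inl e.1) (Sum.inl t₀) + 1 = G.dist (Sum.inr e.2) (Sum.inl t₀)) with hF
  refine ⟨F, Finset.filter_subset _ _, ?_, ?_, ?_⟩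
  · -- beads
    intro b
    rw [hF, Finset.card_eq_one]
    have hbne : (Sum.inr b : T ⊕ B) ≠ Sum.inl t₀ := by simp
    obtain ⟨u, hadj, hdist⟩ := aux_exists_parent (hreach (Sum.inr b)) hbne
    obtain ⟨t, rfl, htE⟩ := adjInr hadj
    refine ⟨(t, b), ?_⟩
    rw [Finset.eq_singleton_iff_unique_mem]
    constructor
    · exact Finset.mem_filter.mpr ⟨Finset.mem_filter.mpr ⟨htE, hdist⟩, rfl⟩
    · intro x hx
      simp only [Finset.mem_filter] at hx
      obtain ⟨⟨hx1, hx2⟩, hx3⟩ := hx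
      have hxE : (x.1, b) ∈ E := by rw [← hx3, Prod.mk.eta]; exact hx1
      have a' : G.Adj (Sum.inr b) (Sum.inl x.1) := ((adjTB x.1 b).mpr hxE).symm
      have hx2' : G.dist (Sum.inl x.1) (Sum.inl t₀) + 1 = G.dist (Sum.inr b) (Sum.inl t₀) := by
        rw [← hx3]; exact hx2
      have huniq := aux_parent_unique hacyclic a' hadj (hreach (Sum.inr b)) hx2' hdist
      exact Prod.ext (Sum.inl.inj huniq) hx3
  · -- the distinguished thief t₀
    have hempty : (E.filter (fun e => e.1 = t₀)).filter
        (fun e => ¬ (G.dist (Sum.inl e.1) (Sum.inl t₀) + 1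
          = G.dist (Sum.inr e.2) (Sum.inl t₀))) = ∅ := by
      rw [Finset.filter_eq_empty_iff]
      intro x hx
      simp only [Finset.mem_filter] at hx
      obtain ⟨hxE, hx1⟩ := hx
      simp only [not_not]
      have hxE' : (t₀, x.2) ∈ E := by rw [← hx1, Prod.mk.eta]; exact hxE
      have a : G.Adj (Sum.inl t₀) (Sum.inr x.2) := (adjTB t₀ x.2).mpr hxE'
      have hdi := aux_dichotomy hacyclic a (hreach (Sum.inl t₀))
      have hzero : G.dist (Sum.inl t₀) (Sum.inl t₀) = 0 := SimpleGraph.dist_self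
      show G.dist (Sum.inl x.1) (Sum.inl t₀) + 1 = G.dist (Sum.inr x.2) (Sum.inl t₀)
      rw [hx1]
      omega
    have hsplit := Finset.card_filter_add_card_filter_not
      (s := E.filter (fun e => e.1 = t₀))
      (p := fun e => G.dist (Sum.inl e.1) (Sum.inl t₀) + 1
          = G.dist (Sum.inr e.2) (Sum.inl t₀))
    rw [hF, Finset.filter_comm]
    rw [hempty, Finset.card_empty, hfib_eq t₀] at hsplit
    omega
  · -- the other thieves
    intro t ht
    have htne : (Sum.inl t : T ⊕ B) ≠ Sum.inl t₀ := by simp [ht]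
    obtain ⟨u, hadj, hdist⟩ := aux_exists_parent (hreach (Sum.inl t)) htne
    obtain ⟨b₀, rfl, hb₀E⟩ := adjInl hadj
    have hone : (E.filter (fun e => e.1 = t)).filter
        (fun e => ¬ (G.dist (Sum.inl e.1) (Sum.inl t₀) + 1
          = G.dist (Sum.inr e.2) (Sum.inl t₀))) = {(t, b₀)} := by
      rw [Finset.eq_singleton_iff_unique_mem]
      constructor
      · refine Finset.mem_filter.mpr ⟨Finset.mem_filter.mpr ⟨hb₀E, rfl⟩, ?_⟩
        show ¬ (G.dist (Sum.inl t) (Sum.inl t₀) + 1 = G.dist (Sum.inr b₀) (Sum.inl t₀))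
        omega
      · intro x hx
        simp only [Finset.mem_filter] at hx
        obtain ⟨⟨hx1, hx2⟩, hx3⟩ := hx
        have hxE : (t, x.2) ∈ E := by rw [← hx2, Prod.mk.eta]; exact hx1
        have a : G.Adj (Sum.inl t) (Sum.inr x.2) := (adjTB t x.2).mpr hxE
        have hdi := aux_dichotomy hacyclic a (hreach (Sum.inl t))
        have hx3' : ¬ (G.dist (Sum.inl t) (Sum.inl t₀) + 1
            = G.dist (Sum.inr x.2) (Sum.inl t₀)) := by
          rw [← hx2]; exact hx3
        have hpar : G.dist (Sum.inr x.2) (Sum.inl t₀) + 1 = G.dist (Sum.inl t) (Sum.inl t₀) := by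
          rcases hdi with h | h
          · exact absurd h hx3'
          · exact h
        have huniq := aux_parent_unique hacyclic a hadj (hreach (Sum.inl t)) hpar hdist
        exact Prod.ext hx2 (Sum.inr.inj huniq)
    have hsplit := Finset.card_filter_add_card_filter_not
      (s := E.filter (fun e => e.1 = t))
      (p := fun e => G.dist (Sum.inl e.1) (Sum.inl t₀) + 1
          = G.dist (Sum.inr e.2) (Sum.inl t₀))
    rw [hF, Finset.filter_comm]
    rw [hone, Finset.card_singleton, hfib_eq t] at hsplit
    omega
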